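/- arXiv:0711.0240 — 2 statements merged into one kernel-verified Lean document; each statement's English description precedes it below -/
import Mathlib

section
/- Let (A_n) be a sequence of measurable subsets of a probability space such that there exists K > 0 with μ(A_n ∩ A_m) ≤ K·μ(A_n)·μ(A_m) for all m > n, and such that ∑ μ(A_n) = ∞. Then the measure of the limsup set {x : x ∈ A_n for infinitely many n} is at least 1/K. -/
open MeasureTheory Filter
open scoped ENNReal NNReal Topology

/-- Cauchy–Schwarz step. -/
lemma cs_union_bound {Ω : Type*} [MeasurableSpace Ω] (μ : Measure Ω)
    (A : ℕ → Set Ω) (hA : ∀ n, MeasurableSet (A n)) (I : Finset ℕ)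
    (U : Set Ω) (hU : MeasurableSet U) (hsub : ∀ n ∈ I, A n ⊆ U) :
    (∑ n ∈ I, μ (A n)) * (∑ n ∈ I, μ (A n)) ≤
      μ U * ∑ n ∈ I, ∑ m ∈ I, μ (A n ∩ A m) := by
  have hfmeas : Measurable (fun x => ∑ n ∈ I, (A n).indicator (fun _ => (1:ℝ≥0∞)) x) :=
    Finset.measurable_sum _ (fun n _ => measurable_const.indicator (hA n))
  have hgmeas : Measurable (U.indicator (fun _ => (1:ℝ≥0∞))) :=
    measurable_const.indicator hU
  have h1 : ∫⁻ x, (∑ n ∈ I, (A n).indicator (fun _ => (1:ℝ≥0∞)) x) ∂μ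
      = ∑ n ∈ I, μ (A n) := by
    rw [lintegral_finset_sum _ (fun n _ => measurable_const.indicator (hA n))]
    refine Finset.sum_congr rfl fun n _ => ?_
    simpa using lintegral_indicator_const (μ := μ) (hA n) 1
  have h2 : ∫⁻ x, (∑ n ∈ I, (A n).indicator (fun _ => (1:ℝ≥0∞)) x)
        * (∑ n ∈ I, (A n).indicator (fun _ => (1:ℝ≥0∞)) x) ∂μ
      = ∑ n ∈ I, ∑ m ∈ I, μ (A n ∩ A m) := by
    have hpt : ∀ x, (∑ n ∈ I, (A n).indicator (fun _ => (1:ℝ≥0∞)) x)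
        * (∑ n ∈ I, (A n).indicator (fun _ => (1:ℝ≥0∞)) x)
        = ∑ n ∈ I, ∑ m ∈ I, (A n ∩ A m).indicator (fun _ => (1:ℝ≥0∞)) x := by
      intro x
      rw [Finset.sum_mul_sum]
      refine Finset.sum_congr rfl fun n _ => Finset.sum_congr rfl fun m _ => ?_
      have := Set.inter_indicator_mul (s := A n) (t := A m)
        (fun _ : Ω => (1 : ℝ≥0∞)) (fun _ => (1 : ℝ≥0∞)) x
      simpa using this.symm
    rw [lintegral_congr hpt,
      lintegral_finset_sum _ (fun n _ => Finset.measurable_sum _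
        (fun m _ => measurable_const.indicator ((hA n).inter (hA m))))]
    refine Finset.sum_congr rfl fun n _ => ?_
    rw [lintegral_finset_sum _ (fun m _ =>
      measurable_const.indicator ((hA n).inter (hA m)))]
    refine Finset.sum_congr rfl fun m _ => ?_
    simpa using lintegral_indicator_const (μ := μ) ((hA n).inter (hA m)) 1
  have hpq : Real.HolderConjugate 2 2 := by constructor <;> norm_num
  have holder := ENNReal.lintegral_mul_le_Lp_mul_Lq μ hpq hfmeas.aemeasurable
    hgmeas.aemeasurable
  have hfg : ∀ x, ((fun x => ∑ n ∈ I, (A n).indicator (fun _ => (1:ℝ≥0∞)) x)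
      * U.indicator (fun _ => (1:ℝ≥0∞))) x
      = ∑ n ∈ I, (A n).indicator (fun _ => (1:ℝ≥0∞)) x := by
    intro x
    rw [Pi.mul_apply]
    by_cases hx : x ∈ U
    · simp [Set.indicator_of_mem hx]
    · have hfx : (∑ n ∈ I, (A n).indicator (fun _ => (1:ℝ≥0∞)) x) = 0 :=
        Finset.sum_eq_zero fun n hn =>
          Set.indicator_of_notMem (fun hxA => hx (hsub n hn hxA)) _
      simp [hfx]
  have hg2 : ∫⁻ x, U.indicator (fun _ => (1:ℝ≥0∞)) x ^ (2:ℝ) ∂μ = μ U := by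
    have hpt : ∀ x, U.indicator (fun _ => (1:ℝ≥0∞)) x ^ (2:ℝ)
        = U.indicator (fun _ => (1:ℝ≥0∞)) x := by
      intro x
      by_cases hx : x ∈ U <;>
        simp [Set.indicator_of_mem, Set.indicator_of_notMem, hx, ENNReal.rpow_two]
    rw [lintegral_congr hpt]
    simpa using lintegral_indicator_const (μ := μ) hU 1
  have hf2 : ∫⁻ x, (∑ n ∈ I, (A n).indicator (fun _ => (1:ℝ≥0∞)) x) ^ (2:ℝ) ∂μ
      = ∑ n ∈ I, ∑ m ∈ I, μ (A n ∩ A m) := by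
    rw [← h2]
    exact lintegral_congr fun x => by rw [ENNReal.rpow_two, sq]
  rw [lintegral_congr hfg, h1, hf2, hg2] at holder
  set S := ∑ n ∈ I, μ (A n)
  set D := ∑ n ∈ I, ∑ m ∈ I, μ (A n ∩ A m)
  calc S * S ≤ (D ^ (1/2:ℝ) * μ U ^ (1/2:ℝ)) * (D ^ (1/2:ℝ) * μ U ^ (1/2:ℝ)) :=
        mul_le_mul' holder holder
    _ = (D ^ (1/2:ℝ) * D ^ (1/2:ℝ)) * (μ U ^ (1/2:ℝ) * μ U ^ (1/2:ℝ)) := by ring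
    _ = D * μ U := by
        rw [← ENNReal.rpow_add_of_nonneg _ _ (by norm_num) (by norm_num),
          ← ENNReal.rpow_add_of_nonneg _ _ (by norm_num) (by norm_num)]
        norm_num
    _ = μ U * D := mul_comm _ _

/-- Paley–Zygmund / Kochen–Stone type second Borel–Cantelli lemma. -/
theorem paley_zygmund_borel_cantelli
    {Ω : Type*} [MeasurableSpace Ω] (μ : Measure Ω) [IsProbabilityMeasure μ]
    (A : ℕ → Set Ω) (hA : ∀ n, MeasurableSet (A n))
    (K : ℝ≥0) (hK : 0 < K)
    (hcorr : ∀ m n : ℕ, n < m → μ (A n ∩ A m) ≤ (K : ℝ≥0∞) * μ (A n) * μ (A m))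
    (hdiv : ∑' n, μ (A n) = ⊤) :
    (K : ℝ≥0∞)⁻¹ ≤ μ (Filter.limsup A Filter.atTop) := by
  -- symmetric correlation bound
  have hcorr' : ∀ m n : ℕ, n ≠ m →
      μ (A n ∩ A m) ≤ (K : ℝ≥0∞) * μ (A n) * μ (A m) := by
    intro m n hnm
    rcases lt_or_gt_of_ne hnm with h | h
    · exact hcorr m n h
    · rw [Set.inter_comm]
      calc μ (A m ∩ A n) ≤ (K : ℝ≥0∞) * μ (A m) * μ (A n) := hcorr n m h
        _ = (K : ℝ≥0∞) * μ (A n) * μ (A m) := by ring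
  set U : ℕ → Set Ω := fun N => ⋃ n, ⋃ (_ : N ≤ n), A n with hU_def
  have hUmeas : ∀ N, MeasurableSet (U N) := fun N =>
    MeasurableSet.iUnion fun n => MeasurableSet.iUnion fun _ => hA n
  have hlimsup : Filter.limsup A Filter.atTop = ⋂ N, U N := by
    rw [limsup_eq_iInf_iSup_of_nat]
    simp only [Set.iInf_eq_iInter, Set.iSup_eq_iUnion, hU_def]
  have hUanti : Antitone U := by
    intro a b hab
    exact Set.iUnion_mono fun n => Set.iUnion_subset fun h =>
      Set.subset_iUnion_of_subset (le_trans hab h) le_rfl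
  have hInter : μ (⋂ N, U N) = ⨅ N, μ (U N) :=
    Antitone.measure_iInter hUanti (fun N => (hUmeas N).nullMeasurableSet)
      ⟨0, measure_ne_top μ _⟩
  rw [hlimsup, hInter]
  refine le_iInf fun N => ?_
  -- partial sums of the tail
  set s : ℕ → ℝ≥0∞ := fun m => ∑ n ∈ Finset.Ico N (N + m), μ (A n) with hs_def
  have hs_top : Tendsto s atTop (𝓝 ⊤) := by
    have htail : ∑' n, μ (A (n + N)) = ⊤ := by
      have hsplit := Summable.sum_add_tsum_nat_add' (f := fun n => μ (A n)) (k := N)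
        ENNReal.summable
      rw [hdiv] at hsplit
      have hhead : (∑ i ∈ Finset.range N, μ (A i)) ≠ ⊤ :=
        (ENNReal.sum_lt_top.2 fun i _ => measure_lt_top μ _).ne
      rcases ENNReal.add_eq_top.1 hsplit with h | h
      · exact absurd h hhead
      · exact h
    have := ENNReal.tendsto_nat_tsum (fun n => μ (A (n + N)))
    rw [htail] at this
    have heq : ∀ m, (∑ i ∈ Finset.range m, μ (A (i + N))) = s m := by
      intro m
      simp only [hs_def]
      rw [Finset.sum_Ico_eq_sum_range]
      simp [add_comm, Nat.add_sub_cancel_left]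
    exact this.congr heq
  -- key inequality for each m with large enough partial sum
  have hkey : ∀ m, 1 ≤ s m → ((s m)⁻¹ + (K : ℝ≥0∞))⁻¹ ≤ μ (U N) := by
    intro m hm1
    have hsm : s m = ∑ n ∈ Finset.Ico N (N + m), μ (A n) := rfl
    rw [hsm] at hm1 ⊢
    set I := Finset.Ico N (N + m) with hI
    set t := ∑ n ∈ I, μ (A n) with ht
    have ht0 : t ≠ 0 := by
      intro h
      rw [h] at hm1
      exact (not_le.2 zero_lt_one) hm1
    have httop : t ≠ ⊤ :=
      (ENNReal.sum_lt_top.2 fun i _ => measure_lt_top μ _).ne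
    have hsub : ∀ n ∈ I, A n ⊆ U N := by
      intro n hn
      have hNn : N ≤ n := (Finset.mem_Ico.1 hn).1
      exact Set.subset_iUnion_of_subset n (Set.subset_iUnion_of_subset hNn le_rfl)
    have hcs := cs_union_bound μ A hA I (U N) (hUmeas N) hsub
    have hdouble : (∑ n ∈ I, ∑ m' ∈ I, μ (A n ∩ A m')) ≤ t + (K : ℝ≥0∞) * (t * t) := by
      have hrow : ∀ n ∈ I, (∑ m' ∈ I, μ (A n ∩ A m')) ≤
          μ (A n) + (K : ℝ≥0∞) * μ (A n) * t := by
        intro n hn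
        rw [← Finset.add_sum_erase I _ hn]
        gcongr
        · rw [Set.inter_self]
        · calc (∑ m' ∈ I.erase n, μ (A n ∩ A m'))
              ≤ ∑ m' ∈ I.erase n, (K : ℝ≥0∞) * μ (A n) * μ (A m') := by
                refine Finset.sum_le_sum fun m' hm' => ?_
                exact hcorr' m' n (Finset.ne_of_mem_erase hm').symm
            _ = (K : ℝ≥0∞) * μ (A n) * ∑ m' ∈ I.erase n, μ (A m') := by
                rw [Finset.mul_sum]
            _ ≤ (K : ℝ≥0∞) * μ (A n) * t := by
                gcongr
                rw [ht]
                exact Finset.sum_le_sum_of_subset (Finset.erase_subset _ _)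
      calc (∑ n ∈ I, ∑ m' ∈ I, μ (A n ∩ A m'))
          ≤ ∑ n ∈ I, (μ (A n) + (K : ℝ≥0∞) * μ (A n) * t) :=
            Finset.sum_le_sum hrow
        _ = t + (K : ℝ≥0∞) * (t * t) := by
            rw [Finset.sum_add_distrib]
            congr 1
            calc (∑ n ∈ I, (K : ℝ≥0∞) * μ (A n) * t)
                = (K : ℝ≥0∞) * (∑ n ∈ I, μ (A n)) * t := by
                  rw [← Finset.sum_mul, ← Finset.mul_sum]
              _ = (K : ℝ≥0∞) * (t * t) := by rw [mul_assoc, ← ht]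
    have hmain : t * t ≤ μ (U N) * ((t⁻¹ + (K : ℝ≥0∞)) * (t * t)) := by
      have heq : (t⁻¹ + (K : ℝ≥0∞)) * (t * t) = t + (K : ℝ≥0∞) * (t * t) := by
        rw [add_mul, ← mul_assoc, ENNReal.inv_mul_cancel ht0 httop, one_mul]
      rw [heq]
      exact le_trans hcs (mul_le_mul_right hdouble _)
    have hcancel : 1 ≤ μ (U N) * (t⁻¹ + (K : ℝ≥0∞)) := by
      have htt0 : t * t ≠ 0 := mul_ne_zero ht0 ht0
      have htttop : t * t ≠ ⊤ := ENNReal.mul_ne_top httop httop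
      have : (1 : ℝ≥0∞) * (t * t) ≤ (μ (U N) * (t⁻¹ + (K : ℝ≥0∞))) * (t * t) := by
        rw [one_mul, mul_assoc]
        exact hmain
      exact (ENNReal.mul_le_mul_iff_left htt0 htttop).1 this
    rw [ENNReal.inv_le_iff_le_mul]
    · rw [mul_comm]; exact hcancel
    · intro _
      exact fun h => by
        rcases add_eq_zero.1 h with ⟨_, hK0⟩
        exact (ENNReal.coe_ne_zero.2 hK.ne') hK0
    · intro h
      exact absurd h (ENNReal.add_ne_top.2 ⟨ENNReal.inv_ne_top.2 ht0, ENNReal.coe_ne_top⟩)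
  -- pass to the limit
  have htendsto : Tendsto (fun m => ((s m)⁻¹ + (K : ℝ≥0∞))⁻¹) atTop
      (𝓝 ((K : ℝ≥0∞))⁻¹) := by
    have h1 : Tendsto (fun m => (s m)⁻¹) atTop (𝓝 (⊤ : ℝ≥0∞)⁻¹) :=
      hs_top.inv
    rw [ENNReal.inv_top] at h1
    have h2 : Tendsto (fun m => (s m)⁻¹ + (K : ℝ≥0∞)) atTop (𝓝 ((K : ℝ≥0∞))) := by
      have := h1.add (tendsto_const_nhds (x := (K : ℝ≥0∞)))
      simpa using this
    exact h2.inv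
  refine le_of_tendsto htendsto ?_
  have hev : ∀ᶠ m in atTop, 1 ≤ s m :=
    hs_top.eventually (eventually_ge_nhds (by norm_num : (1:ℝ≥0∞) < ⊤))
  exact hev.mono fun m hm => hkey m hm
end

section
/- Let (t_n) be a sequence with t_0 large and t_{n+1} < t_n + log t_{n+1}, t_{n+1} < 2 t_n. If t_n < C·n·log n·log log n for some n ≥ 3 and C ≥ 1, and n is sufficiently large, then t_{n+1} < C·(n+1)·log(n+1)·log log(n+1). -/
/-- Inductive step: if `t_{n+1} < t_n + log t_{n+1}`, `t_{n+1} < 2 t_n` and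
`t_n < C n log n log log n`, then for `n` sufficiently large
`t_{n+1} < C (n+1) log(n+1) log log(n+1)`. -/
theorem inductive_growth_step
    (C : ℝ) (hC : 1 ≤ C) :
    ∃ N : ℕ, 3 ≤ N ∧ ∀ (t : ℕ → ℝ) (n : ℕ), N ≤ n →
      1 < t n →
      t (n + 1) < t n + Real.log (t (n + 1)) →
      t (n + 1) < 2 * t n →
      t n < C * n * Real.log n * Real.log (Real.log n) →
      t (n + 1) < C * (n + 1) * Real.log (n + 1) * Real.log (Real.log (n + 1)) := by
  refine ⟨max 3 ⌈Real.exp (Real.exp 9)⌉₊, le_max_left _ _, ?_⟩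
  intro t n hn ht1 hrec hdouble hbound
  have hnR : Real.exp (Real.exp 9) ≤ (n : ℝ) := by
    have h1 : (⌈Real.exp (Real.exp 9)⌉₊ : ℕ) ≤ n := le_trans (le_max_right _ _) hn
    calc Real.exp (Real.exp 9) ≤ (⌈Real.exp (Real.exp 9)⌉₊ : ℝ) := Nat.le_ceil _
    _ ≤ (n : ℝ) := by exact_mod_cast h1
  have hnpos : (0:ℝ) < (n:ℝ) := lt_of_lt_of_le (Real.exp_pos _) hnR
  set L := Real.log n with hLdef
  have hL : Real.exp 9 ≤ L := by
    calc Real.exp 9 = Real.log (Real.exp (Real.exp 9)) := (Real.log_exp _).symm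
    _ ≤ L := Real.log_le_log (Real.exp_pos _) hnR
  have hL10 : 10 ≤ L := le_trans (by linarith [Real.add_one_le_exp 9]) hL
  set LL := Real.log L with hLLdef
  have hLL9 : 9 ≤ LL := by
    calc (9:ℝ) = Real.log (Real.exp 9) := (Real.log_exp _).symm
    _ ≤ LL := Real.log_le_log (Real.exp_pos _) hL
  have hL' : L ≤ Real.log ((n:ℝ)+1) := Real.log_le_log hnpos (by linarith)
  have hLL' : LL ≤ Real.log (Real.log ((n:ℝ)+1)) := Real.log_le_log (by linarith) hL'
  have hCpos : (0:ℝ) < C := by linarith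
  have hRHS : C * n * L * LL + C * L * LL ≤
      C * ((n:ℝ)+1) * Real.log ((n:ℝ)+1) * Real.log (Real.log ((n:ℝ)+1)) := by
    have h1 : C * ((n:ℝ)+1) * L * LL ≤ C * ((n:ℝ)+1) * Real.log ((n:ℝ)+1) * LL := by
      have := mul_le_mul_of_nonneg_right
        (mul_le_mul_of_nonneg_left hL' (by positivity : (0:ℝ) ≤ C * ((n:ℝ)+1)))
        (by linarith : (0:ℝ) ≤ LL)
      linarith [this]
    have h2 : C * ((n:ℝ)+1) * Real.log ((n:ℝ)+1) * LL ≤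
        C * ((n:ℝ)+1) * Real.log ((n:ℝ)+1) * Real.log (Real.log ((n:ℝ)+1)) := by
      apply mul_le_mul_of_nonneg_left hLL'
      have : (0:ℝ) ≤ Real.log ((n:ℝ)+1) := by linarith
      positivity
    have h0 : C * n * L * LL + C * L * LL = C * ((n:ℝ)+1) * L * LL := by ring
    linarith
  have key : t (n+1) < C * n * L * LL + C * L * LL := by
    rcases le_or_gt (t (n+1)) (t n) with h | h
    · have : t n < C * n * L * LL := hbound
      nlinarith [mul_pos (mul_pos hCpos (by linarith : (0:ℝ) < L)) (by linarith : (0:ℝ) < LL)]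
    · have htpos : (0:ℝ) < t (n+1) := by linarith
      have hlog1 : Real.log (t (n+1)) ≤ Real.log (2 * t n) :=
        Real.log_le_log htpos (le_of_lt hdouble)
      have htnpos : (0:ℝ) < t n := by linarith
      have hlog2 : Real.log (2 * t n) = Real.log 2 + Real.log (t n) :=
        Real.log_mul (by norm_num) (ne_of_gt htnpos)
      have hLpos : (0:ℝ) < L := by linarith
      have hLLpos : (0:ℝ) < LL := by linarith
      have hlog3 : Real.log (t n) ≤ Real.log (C * n * L * LL) :=
        Real.log_le_log htnpos (le_of_lt hbound)
      have hCne : C ≠ 0 := ne_of_gt hCpos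
      have hnne : (n:ℝ) ≠ 0 := ne_of_gt hnpos
      have hLne : L ≠ 0 := ne_of_gt hLpos
      have hLLne : LL ≠ 0 := ne_of_gt hLLpos
      have hsplit : Real.log (C * n * L * LL) =
          Real.log C + L + LL + Real.log LL := by
        rw [Real.log_mul (mul_ne_zero (mul_ne_zero hCne hnne) hLne) hLLne,
            Real.log_mul (mul_ne_zero hCne hnne) hLne,
            Real.log_mul hCne hnne]
      have hlogC : Real.log C ≤ C - 1 := Real.log_le_sub_one_of_pos hCpos
      have hlogLL : Real.log LL ≤ LL - 1 := Real.log_le_sub_one_of_pos (by linarith)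
      have hlog2' : Real.log 2 ≤ 1 := by
        have := Real.log_le_sub_one_of_pos (by norm_num : (0:ℝ) < 2); linarith
      have hfinal : Real.log (t (n+1)) ≤ C + L + 2 * LL - 1 := by
        rw [hlog2] at hlog1
        rw [hsplit] at hlog3
        linarith
      have p1 : (0:ℝ) ≤ (L-10)*(LL-9) := mul_nonneg (by linarith) (by linarith)
      have p2 : (0:ℝ) ≤ (C-1)*(L*LL-1) := mul_nonneg (by linarith) (by nlinarith)
      have hsmall : C + L + 2 * LL ≤ C * L * LL := by nlinarith [p1, p2]
      linarith
  linarith [hRHS]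
end
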